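/- If L₁, L₂, C are regular, then C₂ = { s ∈ L₂ | ∃ p ∈ L₁, ps ∈ C and no nonempty w₃, w₄ exist with s = w₃w₄, p w₃ ∈ L₁, w₄ ∈ L₂ } is regular. -/

import Mathlib

/-- The extended alphabet `A ∪ {□}` is modeled as `Option A` (`none` is `□`).
The erasing homomorphism `π` maps each letter of `A` to itself and `□` to the
empty word. -/
def eraseBox {A : Type} (w : List (Option A)) : List A := w.filterMap id

/-- Inverse image `π⁻¹(L)` of a language `L ⊆ A*` under the erasing
homomorphism. -/
def piInv {A : Type} (L : Set (List A)) : Set (List (Option A)) :=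
  {w | eraseBox w ∈ L}

/-- The embedding of a language over `A` into the extended alphabet
`A ∪ {□}`. -/
def emb {A : Type} (L : Set (List A)) : Set (List (Option A)) :=
  {w | ∃ u ∈ L, w = u.map some}

/-- Concatenation of languages. -/
def conc {X : Type} (L K : Set (List X)) : Set (List X) :=
  {w | ∃ u ∈ L, ∃ v ∈ K, w = u ++ v}

/-- The singleton language `{□}` over the extended alphabet. -/
def boxLang {A : Type} : Set (List (Option A)) := {[none]}

/-- The longest-match condition `c(p,s)`: no nonempty prefix of `s` can be
absorbed into the `L₁`-part. -/
def lmCond {A : Type} (L₁ L₂ : Set (List A)) (p s : List A) : Prop :=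
  ¬ ∃ w₃ w₄, w₃ ≠ [] ∧ s = w₃ ++ w₄ ∧ p ++ w₃ ∈ L₁ ∧ w₄ ∈ L₂

/-- The set `I = { w₁ □ w₂ | w₁w₂ ∈ C, w₁ ∈ L₁, w₂ ∈ L₂, c(w₁,w₂) }`. -/
def Iset {A : Type} (L₁ L₂ C : Set (List A)) : Set (List (Option A)) :=
  {w | ∃ p s, w = p.map some ++ none :: s.map some ∧
    p ++ s ∈ C ∧ p ∈ L₁ ∧ s ∈ L₂ ∧ lmCond L₁ L₂ p s}

namespace C2Aux

variable {A : Type}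

lemma isRegular_empty : Language.IsRegular (∅ : Set (List A)) :=
  ⟨Unit, inferInstance, ⟨fun _ _ => (), (), ∅⟩, by ext x; simp only [DFA.mem_accepts]; exact iff_of_false (Set.notMem_empty _) (Set.notMem_empty _)⟩

/-- Union of two regular languages is regular. -/
lemma isRegular_union {L K : Set (List A)} (hL : Language.IsRegular L)
    (hK : Language.IsRegular K) : Language.IsRegular ((L ∪ K : Set (List A))) := by
  obtain ⟨σ, _, M, rfl⟩ := hL
  obtain ⟨τ, _, N, rfl⟩ := hK
  refine ⟨σ × τ, inferInstance,
    ⟨fun p a => (M.step p.1 a, N.step p.2 a), (M.start, N.start),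
     {p | p.1 ∈ M.accept ∨ p.2 ∈ N.accept}⟩, ?_⟩
  have key : ∀ (x : List A) (p : σ) (q : τ),
      DFA.evalFrom ⟨fun p a => (M.step p.1 a, N.step p.2 a), (M.start, N.start),
        {p : σ × τ | p.1 ∈ M.accept ∨ p.2 ∈ N.accept}⟩ (p, q) x
        = (M.evalFrom p x, N.evalFrom q x) := by
    intro x
    induction x with
    | nil => intro p q; rfl
    | cons a x ih => intro p q; simpa [DFA.evalFrom] using ih (M.step p a) (N.step q a)
  ext x
  show _ ∈ _ ↔ x ∈ M.accepts ∨ x ∈ N.accepts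
  simp only [DFA.mem_accepts, DFA.eval, key]
  rfl

/-- Intersection of two regular languages is regular. -/
lemma isRegular_inter {L K : Set (List A)} (hL : Language.IsRegular L)
    (hK : Language.IsRegular K) : Language.IsRegular ((L ∩ K : Set (List A))) := by
  obtain ⟨σ, _, M, rfl⟩ := hL
  obtain ⟨τ, _, N, rfl⟩ := hK
  refine ⟨σ × τ, inferInstance,
    ⟨fun p a => (M.step p.1 a, N.step p.2 a), (M.start, N.start),
     {p | p.1 ∈ M.accept ∧ p.2 ∈ N.accept}⟩, ?_⟩
  have key : ∀ (x : List A) (p : σ) (q : τ),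
      DFA.evalFrom ⟨fun p a => (M.step p.1 a, N.step p.2 a), (M.start, N.start),
        {p : σ × τ | p.1 ∈ M.accept ∧ p.2 ∈ N.accept}⟩ (p, q) x
        = (M.evalFrom p x, N.evalFrom q x) := by
    intro x
    induction x with
    | nil => intro p q; rfl
    | cons a x ih => intro p q; simpa [DFA.evalFrom] using ih (M.step p a) (N.step q a)
  ext x
  show _ ∈ _ ↔ x ∈ M.accepts ∧ x ∈ N.accepts
  simp only [DFA.mem_accepts, DFA.eval, key]
  rfl

/-- Complement of a regular language is regular. -/
lemma isRegular_compl {L : Set (List A)} (hL : Language.IsRegular L) :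
    Language.IsRegular ((Lᶜ : Set (List A))) := by
  obtain ⟨σ, _, M, rfl⟩ := hL
  refine ⟨σ, inferInstance, ⟨M.step, M.start, M.acceptᶜ⟩, ?_⟩
  ext x
  show _ ∈ _ ↔ ¬ x ∈ M.accepts
  simp only [DFA.mem_accepts, DFA.eval]
  exact Iff.rfl

/-- Finite indexed unions of regular languages are regular. -/
lemma isRegular_iUnion {ι : Type} [Fintype ι] (L : ι → Set (List A))
    (h : ∀ i, Language.IsRegular (L i)) : Language.IsRegular ((⋃ i, L i : Set (List A))) := by
  classical
  have key : ∀ s : Finset ι, Language.IsRegular ((⋃ i ∈ s, L i : Set (List A))) := by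
    intro s
    induction s using Finset.induction with
    | empty => simpa using isRegular_empty (A := A)
    | insert _ _ ha ih =>
      rw [Finset.set_biUnion_insert]
      exact isRegular_union (h _) ih
  have e : (⋃ i, L i) = ⋃ i ∈ Finset.univ, L i := by simp
  rw [e]; exact key _
variable {A : Type}

lemma isRegular_bad {σ₁ : Type} [Fintype σ₁] (M₁ : DFA A σ₁) (q : σ₁)
    {K : Set (List A)} (hK : Language.IsRegular K) :
    Language.IsRegular ({s | ∃ w₃ w₄, w₃ ≠ [] ∧ s = w₃ ++ w₄ ∧
      M₁.evalFrom q w₃ ∈ M₁.accept ∧ w₄ ∈ K} : Set (List A)) := by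
  obtain ⟨τ, _, N, rfl⟩ := hK
  classical
  let D : DFA A (σ₁ × Set τ) :=
    ⟨fun p a => (M₁.step p.1 a,
        (fun t => N.step t a) '' p.2 ∪
          (if M₁.step p.1 a ∈ M₁.accept then {N.start} else ∅)),
     (q, ∅), {p | ∃ t ∈ p.2, t ∈ N.accept}⟩
  refine ⟨σ₁ × Set τ, inferInstance, D, ?_⟩
  have key : ∀ s : List A, D.evalFrom (q, ∅) s =
      (M₁.evalFrom q s, {t | ∃ w₃ w₄, w₃ ≠ [] ∧ s = w₃ ++ w₄ ∧
        M₁.evalFrom q w₃ ∈ M₁.accept ∧ t = N.evalFrom N.start w₄}) := by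
    intro s
    induction s using List.reverseRecOn with
    | nil =>
      have : {t | ∃ w₃ w₄, w₃ ≠ [] ∧ ([] : List A) = w₃ ++ w₄ ∧
          M₁.evalFrom q w₃ ∈ M₁.accept ∧ t = N.evalFrom N.start w₄} = (∅ : Set τ) := by
        ext t
        simp only [Set.mem_setOf_eq, Set.mem_empty_iff_false, iff_false, not_exists]
        rintro w₃ w₄ ⟨h3, h4, -⟩
        exact h3 (List.append_eq_nil_iff.mp h4.symm).1
      rw [this]; rfl
    | append_singleton s a ih =>
      have h1 : D.evalFrom (q, ∅) (s ++ [a]) = D.step (D.evalFrom (q, ∅) s) a := by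
        rw [DFA.evalFrom_of_append]; rfl
      have h2 : M₁.evalFrom q (s ++ [a]) = M₁.step (M₁.evalFrom q s) a := by
        rw [DFA.evalFrom_of_append]; rfl
      rw [h1, ih]
      have hset : (fun t => N.step t a) '' {t | ∃ w₃ w₄, w₃ ≠ [] ∧ s = w₃ ++ w₄ ∧
            M₁.evalFrom q w₃ ∈ M₁.accept ∧ t = N.evalFrom N.start w₄} ∪
          (if M₁.step (M₁.evalFrom q s) a ∈ M₁.accept then {N.start} else ∅)
          = {t | ∃ w₃ w₄, w₃ ≠ [] ∧ s ++ [a] = w₃ ++ w₄ ∧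
            M₁.evalFrom q w₃ ∈ M₁.accept ∧ t = N.evalFrom N.start w₄} := by
        ext t
        constructor
        · rintro (⟨u, ⟨w₃, w₄, h3, rfl, hacc, rfl⟩, rfl⟩ | hmem)
          · refine ⟨w₃, w₄ ++ [a], h3, by simp, hacc, ?_⟩
            rw [DFA.evalFrom_of_append]; rfl
          · split_ifs at hmem with hc
            · simp only [Set.mem_singleton_iff] at hmem
              subst hmem
              exact ⟨s ++ [a], [], by simp, by simp, by rw [h2]; exact hc, rfl⟩
            · exact absurd hmem (Set.notMem_empty t)
        · rintro ⟨w₃, w₄, h3, heq, hacc, rfl⟩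
          rcases List.eq_nil_or_concat w₄ with rfl | ⟨w₄', a', rfl⟩
          · rw [List.append_nil] at heq
            subst heq
            right
            have hc : M₁.step (M₁.evalFrom q s) a ∈ M₁.accept := by rw [← h2]; exact hacc
            rw [if_pos hc]
            rfl
          · have heq' : s ++ [a] = (w₃ ++ w₄') ++ [a'] := by
              rw [heq]; simp [List.concat_eq_append]
            obtain ⟨hs, ha⟩ := List.append_inj' heq' rfl
            have ha' : a' = a := by simpa using ha.symm
            subst ha' hs
            left
            refine ⟨N.evalFrom N.start w₄', ⟨w₃, w₄', h3, rfl, hacc, rfl⟩, ?_⟩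
            rw [List.concat_eq_append, DFA.evalFrom_of_append]; rfl
      show (M₁.step (M₁.evalFrom q s) a, _) = _
      rw [Prod.mk.injEq]
      exact ⟨h2.symm, hset⟩
  ext x
  show x ∈ D.accepts ↔ _
  rw [DFA.mem_accepts]
  show D.evalFrom (q, ∅) x ∈ D.accept ↔ _
  rw [key]
  constructor
  · rintro ⟨t, ⟨w₃, w₄, h3, h4, hacc, rfl⟩, ht⟩
    exact ⟨w₃, w₄, h3, h4, hacc, ht⟩
  · rintro ⟨w₃, w₄, h3, h4, hacc, hw⟩
    exact ⟨N.evalFrom N.start w₄, ⟨w₃, w₄, h3, h4, hacc, rfl⟩, hw⟩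
end C2Aux

/-- If `L₁`, `L₂`, `C` are regular, then
`C₂ = { s ∈ L₂ | ∃ p ∈ L₁, ps ∈ C ∧ c(p,s) }` is regular. -/
theorem C2_isRegular {A : Type} [Fintype A] (L₁ L₂ C : Language A)
    (h₁ : L₁.IsRegular) (h₂ : L₂.IsRegular) (hC : C.IsRegular) :
    Language.IsRegular {s : List A | s ∈ L₂ ∧
      ∃ p ∈ L₁, p ++ s ∈ C ∧ lmCond (L₁ : Set (List A)) L₂ p s} := by
  classical
  obtain ⟨σ₁, i₁, M₁, hM₁⟩ := h₁
  obtain ⟨σC, iC, MC, hMC⟩ := hC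
  let F : σ₁ × σC → Set (List A) := fun pr =>
    if ∃ p : List A, M₁.eval p = pr.1 ∧ pr.1 ∈ M₁.accept ∧ MC.eval p = pr.2 then
      ((L₂ : Set (List A)) ∩ {s | MC.evalFrom pr.2 s ∈ MC.accept}) ∩
        ({s | ∃ w₃ w₄, w₃ ≠ [] ∧ s = w₃ ++ w₄ ∧
          M₁.evalFrom pr.1 w₃ ∈ M₁.accept ∧ w₄ ∈ (L₂ : Set (List A))})ᶜ
    else ∅
  have hreg : ∀ pr, Language.IsRegular (F pr) := by
    intro pr
    dsimp only [F]
    split_ifs with h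
    · refine C2Aux.isRegular_inter (C2Aux.isRegular_inter h₂ ?_)
        (C2Aux.isRegular_compl (C2Aux.isRegular_bad M₁ pr.1 h₂))
      exact ⟨σC, iC, ⟨MC.step, pr.2, MC.accept⟩, rfl⟩
    · exact C2Aux.isRegular_empty
  have heq : {s : List A | s ∈ L₂ ∧
      ∃ p ∈ L₁, p ++ s ∈ C ∧ lmCond (L₁ : Set (List A)) L₂ p s} = ⋃ pr, F pr := by
    ext s
    simp only [Set.mem_iUnion, Set.mem_setOf_eq]
    constructor
    · rintro ⟨hs2, p, hp1, hpC, hlm⟩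
      refine ⟨(M₁.eval p, MC.eval p), ?_⟩
      have hgood : ∃ p' : List A, M₁.eval p' = M₁.eval p ∧ M₁.eval p ∈ M₁.accept ∧
          MC.eval p' = MC.eval p := by
        refine ⟨p, rfl, ?_, rfl⟩
        rw [← DFA.mem_accepts, hM₁]
        exact hp1
      dsimp only [F]
      rw [if_pos hgood]
      refine ⟨⟨hs2, ?_⟩, ?_⟩
      · show MC.evalFrom (MC.evalFrom MC.start p) s ∈ MC.accept
        rw [← DFA.evalFrom_of_append, ← DFA.eval, ← DFA.mem_accepts, hMC]
        exact hpC
      · rintro ⟨w₃, w₄, h3, h4, hacc, hw4⟩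
        refine hlm ⟨w₃, w₄, h3, h4, ?_, hw4⟩
        rw [← hM₁]
        change p ++ w₃ ∈ (M₁.accepts : Language A)
        rw [DFA.mem_accepts, DFA.eval, DFA.evalFrom_of_append]
        exact hacc
    · rintro ⟨pr, hmem⟩
      dsimp only [F] at hmem
      by_cases hgood : ∃ p : List A, M₁.eval p = pr.1 ∧ pr.1 ∈ M₁.accept ∧ MC.eval p = pr.2
      · rw [if_pos hgood] at hmem
        obtain ⟨p, hq1, hq1acc, hqC⟩ := hgood
        obtain ⟨⟨hs2, hCmem⟩, hnot⟩ := hmem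
        refine ⟨hs2, p, ?_, ?_, ?_⟩
        · rw [← hM₁, DFA.mem_accepts, hq1]
          exact hq1acc
        · rw [← hMC, DFA.mem_accepts]
          show MC.evalFrom MC.start (p ++ s) ∈ MC.accept
          rw [DFA.evalFrom_of_append]
          show MC.evalFrom (MC.eval p) s ∈ MC.accept
          rw [hqC]
          exact hCmem
        · rintro ⟨w₃, w₄, h3, h4, hw1, hw2⟩
          refine hnot ⟨w₃, w₄, h3, h4, ?_, hw2⟩
          rw [← hq1]
          show M₁.evalFrom (M₁.evalFrom M₁.start p) w₃ ∈ M₁.accept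
          rw [← DFA.evalFrom_of_append]
          have := (DFA.mem_accepts (M := M₁)).mp (by rw [hM₁]; exact hw1)
          exact this
      · rw [if_neg hgood] at hmem
        exact absurd hmem (Set.notMem_empty s)
  rw [heq]
  exact C2Aux.isRegular_iUnion F hreg
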